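/- In the coin-toss model under the randomised response mechanism q^(ω) for ω ∈ [0,1], Eve's decision δ = 1 minimizes her posterior expected loss given the release value η = 1 if and only if ω ≤ 10/13, and minimizes it given η = 0 if and only if ω ≥ 3/13. In particular, for every ω ∈ [3/13, 10/13] the constant rule δ_E ≡ 1 is Bayes-optimal for Eve regardless of the release value. -/
import Mathlib


open scoped BigOperators

namespace CoinToss

/-- The parameter θ ∈ {0, 1/2}, encoded by a Bool: `false ↦ 0`, `true ↦ 1/2`. -/
noncomputable def thetaVal (t : Bool) : ℝ := if t then 1/2 else 0

/-- Joint pmf of (θ, X): prior P(θ=0)=P(θ=1/2)=1/2 and X | θ ~ Bern(θ). -/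
noncomputable def coinJoint (t x : Bool) : ℝ :=
  if t then 1/4 else (if x then 0 else 1/2)

/-- Bob's 0-1 loss L_B(θ, δ) = 1{δ ≠ θ}. -/
noncomputable def LB (θ δ : ℝ) : ℝ := if δ = θ then 0 else 1

/-- Eve's loss: 0 if δ = x, 1 if (δ,x)=(1,0), 10 if (δ,x)=(0,1). -/
noncomputable def LE (x δ : Bool) : ℝ := if δ = x then 0 else if δ then 1 else 10

variable {H : Type*} [Fintype H]

/-- A release mechanism: Markov kernel from the data space {0,1} to a finite release space. -/
def IsMechanism (q : Bool → H → ℝ) : Prop :=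
  (∀ x h, 0 ≤ q x h) ∧ ∀ x, ∑ h, q x h = 1

/-- Probability of the release value `h` under the joint law of (θ, X, η). -/
noncomputable def relP (q : Bool → H → ℝ) (h : H) : ℝ :=
  ∑ t, ∑ x, coinJoint t x * q x h

/-- Bob's posterior expected loss of decision `d` given release value `h`. -/
noncomputable def postLossB (q : Bool → H → ℝ) (h : H) (d : ℝ) : ℝ :=
  (∑ t, ∑ x, coinJoint t x * q x h * LB (thetaVal t) d) / relP q h

/-- Eve's posterior expected loss of decision `d` given release value `h`. -/
noncomputable def postLossE (q : Bool → H → ℝ) (h : H) (d : Bool) : ℝ :=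
  (∑ t, ∑ x, coinJoint t x * q x h * LE x d) / relP q h

/-- Bayes optimality for Bob: at every release value of positive probability, the rule takes
values in the decision space {0, 1/2} and minimizes the posterior expected loss there. -/
def IsBayesB (q : Bool → H → ℝ) (dB : H → ℝ) : Prop :=
  ∀ h, 0 < relP q h →
    dB h ∈ ({0, 1/2} : Set ℝ) ∧
    ∀ d ∈ ({0, 1/2} : Set ℝ), postLossB q h (dB h) ≤ postLossB q h d

/-- Bayes optimality for Eve. -/
def IsBayesE (q : Bool → H → ℝ) (dE : H → Bool) : Prop :=
  ∀ h, 0 < relP q h → ∀ d : Bool, postLossE q h (dE h) ≤ postLossE q h d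

/-- Bob's integrated risk R_B(q) = E[L_B(θ, δ_B(η))]. -/
noncomputable def RB (q : Bool → H → ℝ) (dB : H → ℝ) : ℝ :=
  ∑ t, ∑ x, ∑ h, coinJoint t x * q x h * LB (thetaVal t) (dB h)

/-- Eve's integrated risk R_E(q) = E[L_E(X, δ_E(η))]. -/
noncomputable def RE (q : Bool → H → ℝ) (dE : H → Bool) : ℝ :=
  ∑ t, ∑ x, ∑ h, coinJoint t x * q x h * LE x (dE h)

end CoinToss

open CoinToss

namespace CoinToss
/-- The randomised response mechanism q^(ω): release η = X with probability 1-ω and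
η = 1-X with probability ω (release values encoded by Bool, `true ↦ 1`, `false ↦ 0`). -/
noncomputable def qrr (ω : ℝ) : Bool → Bool → ℝ := fun x h => if h = x then 1 - ω else ω
end CoinToss

/-- In the coin-toss model under randomised response q^(ω), ω ∈ [0,1]: Eve's decision δ = 1
minimizes her posterior expected loss given η = 1 iff ω ≤ 10/13, and given η = 0 iff
ω ≥ 3/13. In particular, for every ω ∈ [3/13, 10/13] the constant rule δ_E ≡ 1 is
Bayes-optimal for Eve regardless of the release value. -/
theorem coin_toss_rr_eve_decision (ω : ℝ) (hω : ω ∈ Set.Icc (0:ℝ) 1) :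
    ((∀ d : Bool, postLossE (qrr ω) true true ≤ postLossE (qrr ω) true d) ↔ ω ≤ 10/13) ∧
    ((∀ d : Bool, postLossE (qrr ω) false true ≤ postLossE (qrr ω) false d) ↔ 3/13 ≤ ω) ∧
    (ω ∈ Set.Icc (3/13 : ℝ) (10/13) → IsBayesE (qrr ω) (fun _ => true)) := by
  obtain ⟨h0, h1⟩ := hω
  have hT : (0:ℝ) < 1/4 + ω/2 := by linarith
  have hF : (0:ℝ) < 3/4 - ω/2 := by linarith
  have eTT : postLossE (qrr ω) true true = (3/4*ω) / (1/4 + ω/2) := by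
    simp [postLossE, relP, qrr, coinJoint, CoinToss.LE, Fintype.sum_bool]; ring_nf
  have eTF : postLossE (qrr ω) true false = (10/4*(1-ω)) / (1/4 + ω/2) := by
    simp [postLossE, relP, qrr, coinJoint, CoinToss.LE, Fintype.sum_bool]; ring_nf
  have eFT : postLossE (qrr ω) false true = (3/4*(1-ω)) / (3/4 - ω/2) := by
    simp [postLossE, relP, qrr, coinJoint, CoinToss.LE, Fintype.sum_bool]; ring_nf
  have eFF : postLossE (qrr ω) false false = (10/4*ω) / (3/4 - ω/2) := by
    simp [postLossE, relP, qrr, coinJoint, CoinToss.LE, Fintype.sum_bool]; ring_nf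
  have iffT : (∀ d : Bool, postLossE (qrr ω) true true ≤ postLossE (qrr ω) true d) ↔ ω ≤ 10/13 := by
    constructor
    · intro h
      have := h false
      rw [eTT, eTF, div_le_div_iff_of_pos_right hT] at this
      linarith
    · intro h d
      cases d
      · rw [eTT, eTF, div_le_div_iff_of_pos_right hT]; linarith
      · exact le_refl _
  have iffF : (∀ d : Bool, postLossE (qrr ω) false true ≤ postLossE (qrr ω) false d) ↔ 3/13 ≤ ω := by
    constructor
    · intro h
      have := h false
      rw [eFT, eFF, div_le_div_iff_of_pos_right hF] at this
      linarith
    · intro h d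
      cases d
      · rw [eFT, eFF, div_le_div_iff_of_pos_right hF]; linarith
      · exact le_refl _
  refine ⟨iffT, iffF, ?_⟩
  rintro ⟨ha, hb⟩ h _ d
  cases h
  · exact iffF.mpr ha d
  · exact iffT.mpr hb d
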